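/- For every integer r ≥ 1 and every odd integer s ≥ 1, the local antimagic chromatic number of the graph DF(r, 2s) equals 3, i.e., χ_la(DF(r, 2s)) = 3. -/

import Mathlib

namespace LocalAntimagic

variable {V W : Type*}

/-- Induced vertex label: sum of edge labels over edges incident to `v`. -/
noncomputable def fplus (G : SimpleGraph V) (f : Sym2 V → ℕ) (v : V) : ℕ :=
  ∑ᶠ e ∈ G.incidenceSet v, f e

/-- `f` is a local antimagic labeling of `G`: a bijection from the edge set onto
`{1, …, q}` (`q` the number of edges) whose induced vertex labels distinguish
adjacent vertices. -/
def IsLocalAntimagic (G : SimpleGraph V) (f : Sym2 V → ℕ) : Prop :=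
  Set.BijOn f G.edgeSet (Set.Icc 1 G.edgeSet.ncard) ∧
  ∀ ⦃u w : V⦄, G.Adj u w → fplus G f u ≠ fplus G f w

/-- The local antimagic chromatic number: the least number of distinct induced
vertex labels over all local antimagic labelings. -/
noncomputable def chiLA (G : SimpleGraph V) : ℕ :=
  sInf {c : ℕ | ∃ f : Sym2 V → ℕ, IsLocalAntimagic G f ∧ (Set.range (fplus G f)).ncard = c}

/-- `n` disjoint copies of the path `P₃`; in copy `i`, vertex `(i,0) = uᵢ`,
`(i,1) = wᵢ`, `(i,2) = vᵢ`. -/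
def nP3 (n : ℕ) : SimpleGraph (Fin n × Fin 3) :=
  SimpleGraph.fromRel (fun x y => x.1 = y.1 ∧ ((x.2 = 0 ∧ y.2 = 1) ∨ (x.2 = 1 ∧ y.2 = 2)))

/-- Join of two graphs on disjoint vertex sets. -/
def joinG {α β : Type*} (G : SimpleGraph α) (H : SimpleGraph β) : SimpleGraph (α ⊕ β) :=
  SimpleGraph.fromRel (fun x y =>
    match x, y with
    | Sum.inl a, Sum.inl b => G.Adj a b
    | Sum.inr a, Sum.inr b => H.Adj a b
    | Sum.inl _, Sum.inr _ => True
    | Sum.inr _, Sum.inl _ => False)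

/-- Disjoint union of two graphs. -/
def disjUnionG {α β : Type*} (G : SimpleGraph α) (H : SimpleGraph β) : SimpleGraph (α ⊕ β) :=
  SimpleGraph.fromRel (fun x y =>
    match x, y with
    | Sum.inl a, Sum.inl b => G.Adj a b
    | Sum.inr a, Sum.inr b => H.Adj a b
    | _, _ => False)

/-- `m` disjoint copies of `G`. -/
def copies (m : ℕ) (G : SimpleGraph V) : SimpleGraph (Fin m × V) :=
  SimpleGraph.fromRel (fun x y => x.1 = y.1 ∧ G.Adj x.2 y.2)

/-- The fan blade graph `FB(n) = nP₃ ∨ O₁`. -/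
def FB (n : ℕ) : SimpleGraph ((Fin n × Fin 3) ⊕ Fin 1) :=
  joinG (nP3 n) ⊥

/-- The graph obtained from `G` by merging vertices according to `p` (fibers of
`p` are merged into single vertices). -/
def mergeMap (G : SimpleGraph V) (p : V → W) : SimpleGraph W :=
  SimpleGraph.fromRel (fun a b => ∃ x y, G.Adj x y ∧ p x = a ∧ p y = b)

/-- No two distinct vertices of `S` are adjacent or share a common neighbor. -/
def NoCommon (G : SimpleGraph V) (S : Set V) : Prop :=
  ∀ x ∈ S, ∀ y ∈ S, x ≠ y → ¬ G.Adj x y ∧ ∀ z, ¬ (G.Adj x z ∧ G.Adj y z)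

/-- `P` is a partition of the set `S` into nonempty blocks. -/
def IsPartitionOn (S : Set V) (P : Set (Set V)) : Prop :=
  (∀ B ∈ P, B ⊆ S) ∧ (∀ v ∈ S, ∃! B, B ∈ P ∧ v ∈ B) ∧ ∀ B ∈ P, B.Nonempty

/-- `p` identifies exactly the vertices lying in a common block of `P`,
and nothing else; `p` is surjective so the codomain is exactly the merged
vertex set. -/
def IsMergeOf (P : Set (Set V)) (p : V → W) : Prop :=
  Function.Surjective p ∧ ∀ x y : V, p x = p y ↔ (x = y ∨ ∃ B ∈ P, x ∈ B ∧ y ∈ B)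


/-- The diamond fan `DF(2s)`: two copies (`c = 0,1`) of `sP₃`, plus two hub
vertices `y = Sum.inr 0` and `z = Sum.inr 1`; in copy `c`, blade `j`, position
`0,2` are the degree-1 endpoints and `1` the middle vertex of the path. -/
def DF2 (s : ℕ) : SimpleGraph ((Fin 2 × Fin s × Fin 3) ⊕ Fin 2) :=
  SimpleGraph.fromRel (fun x y =>
    match x, y with
    | Sum.inl a, Sum.inl b =>
        a.1 = b.1 ∧ a.2.1 = b.2.1 ∧ ((a.2.2 = 0 ∧ b.2.2 = 1) ∨ (a.2.2 = 1 ∧ b.2.2 = 2))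
    | Sum.inl a, Sum.inr j =>
        (j = 0 ∧ ((a.1 = 0 ∧ a.2.2 ≠ 1) ∨ (a.1 = 1 ∧ a.2.2 = 1))) ∨
        (j = 1 ∧ ((a.1 = 1 ∧ a.2.2 ≠ 1) ∨ (a.1 = 0 ∧ a.2.2 = 1)))
    | _, _ => False)

abbrev DFVert (r s : ℕ) :=
  (Fin r × ((Fin 2 × Fin s × Fin 3) ⊕ Fin 2)) ⊕ ((Fin s × Fin 3) ⊕ Fin 1)

/-- Peanut graph `Pt(n)`: `Sum.inl (i, 0) = u_{i+1}`, `Sum.inl (i, 1) = v_{i+1}`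
for `0 ≤ i ≤ 2n`, and `Sum.inr 0 = x`, `Sum.inr 1 = y`. -/
abbrev PtVert (n : ℕ) := (Fin (2*n+1) × Fin 2) ⊕ Fin 2

def Pt (n : ℕ) : SimpleGraph (PtVert n) :=
  SimpleGraph.fromRel (fun a b =>
    match a, b with
    | Sum.inl p, Sum.inl q =>
        (p.2 = q.2 ∧ (p.1 : ℕ) + 1 = (q.1 : ℕ)) ∨
        (p.1 = q.1 ∧ (p.1 : ℕ) % 2 = 0 ∧ p.2 = 0 ∧ q.2 = 1)
    | Sum.inr j, Sum.inl p => (j = 0 ∧ (p.1 : ℕ) = 0) ∨ (j = 1 ∧ (p.1 : ℕ) = 2*n)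
    | _, _ => False)

/-- Triangular bracelet `TB(n)`: `Sum.inl (j, 0) = u_{2j+1}`,
`Sum.inl (j, 1) = v_{2j+1}` for `0 ≤ j ≤ n`, and `Sum.inr j = z_{2j}`. -/
abbrev TBVert (n : ℕ) := (Fin (n+1) × Fin 2) ⊕ Fin (n+1)

def TB (n : ℕ) : SimpleGraph (TBVert n) :=
  SimpleGraph.fromRel (fun a b =>
    match a, b with
    | Sum.inl p, Sum.inl q => p.1 = q.1 ∧ p.2 = 0 ∧ q.2 = 1
    | Sum.inr j, Sum.inl p =>
        (p.1 : ℕ) = (j : ℕ) ∨ (p.1 : ℕ) + 1 = (j : ℕ) ∨ ((j : ℕ) = 0 ∧ (p.1 : ℕ) = n)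
    | _, _ => False)

/-- Disjoint union of an indexed family of graphs. -/
def sigmaG {ι : Type*} {Vf : ι → Type*} (G : ∀ a, SimpleGraph (Vf a)) :
    SimpleGraph (Σ a, Vf a) :=
  SimpleGraph.fromRel (fun x y =>
    ∃ h : x.1 = y.1, (G y.1).Adj (cast (congrArg Vf h) x.2) y.2)

/-- `FB¹(r,s)`: `Sum.inl (i,j) = w_{i,j}`, `Sum.inr (Sum.inl i) = xᵢ`,
`Sum.inr (Sum.inr (j,0)) = uⱼ`, `Sum.inr (Sum.inr (j,1)) = vⱼ`. -/
def FB1 (r s : ℕ) : SimpleGraph ((Fin r × Fin s) ⊕ (Fin r ⊕ (Fin s × Fin 2))) :=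
  SimpleGraph.fromRel (fun a b =>
    match a, b with
    | Sum.inl w, Sum.inr (Sum.inl x) => w.1 = x
    | Sum.inl w, Sum.inr (Sum.inr uv) => w.2 = uv.1
    | Sum.inr (Sum.inl _), Sum.inr (Sum.inr _) => True
    | _, _ => False)

/-- `FB²(r,s)`: `Sum.inl (i,j,0) = u_{i,j}`, `Sum.inl (i,j,1) = v_{i,j}`,
`Sum.inr (Sum.inl i) = xᵢ`, `Sum.inr (Sum.inr j) = wⱼ`. -/
def FB2 (r s : ℕ) : SimpleGraph ((Fin r × Fin s × Fin 2) ⊕ (Fin r ⊕ Fin s)) :=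
  SimpleGraph.fromRel (fun a b =>
    match a, b with
    | Sum.inl uv, Sum.inr (Sum.inl x) => uv.1 = x
    | Sum.inl uv, Sum.inr (Sum.inr w) => uv.2.1 = w
    | Sum.inr (Sum.inl _), Sum.inr (Sum.inr _) => True
    | _, _ => False)


/-- `DF(r, 2s)`: the disjoint union of `r` copies of `DF(2s)` with one copy of `FB(s)`. -/
def DF (r s : ℕ) : SimpleGraph (DFVert r s) :=
  disjUnionG (copies r (DF2 s)) (FB s)

/-- The degree-2 vertices of `DF(r, 2s)`: the endpoint vertices of all the `P₃`'s. -/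
def DFdeg2 (r s : ℕ) : Set (DFVert r s) :=
  {v | (∃ i c j pos, pos ≠ 1 ∧ v = Sum.inl (i, Sum.inl (c, j, pos))) ∨
       (∃ j pos, pos ≠ 1 ∧ v = Sum.inr (Sum.inl (j, pos)))}

/-- The degree-3 vertices of `DF(r, 2s)`: the middle vertices of all the `P₃`'s. -/
def DFdeg3 (r s : ℕ) : Set (DFVert r s) :=
  {v | (∃ i c j, v = Sum.inl (i, Sum.inl (c, j, 1))) ∨ (∃ j, v = Sum.inr (Sum.inl (j, 1)))}

/-- The `2r+1` hub vertices (of degree `3s`) of `DF(r, 2s)`: the vertices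
`y_i, z_i` of the `DF(2s)` components and the hub `x` of the `FB(s)` component. -/
def DFhubs (r s : ℕ) : Set (DFVert r s) :=
  {v | (∃ i j, v = Sum.inl (i, Sum.inr j)) ∨ (∃ w, v = Sum.inr (Sum.inr w))}

/-- For every `r ≥ 1` and odd `s ≥ 1`, `χ_{la}(DF(r, 2s)) = 3`. -/
-- ===================== construction =====================

abbrev BladeT (r s : ℕ) := (Fin r × Fin 2 × Fin s) ⊕ Fin s

def bIx (r : ℕ) {s : ℕ} : BladeT r s → ℕ
  | .inl (i, c, _) => if (c : ℕ) = 0 then (i : ℕ) else 2*r - (i : ℕ)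
  | .inr _ => r

def jIx {r s : ℕ} : BladeT r s → ℕ
  | .inl (_, _, j) => (j : ℕ)
  | .inr j => (j : ℕ)

def wB (r : ℕ) {s : ℕ} (b : BladeT r s) : ℕ := jIx b * (2*r+1) + bIx r b

def kk (t w : ℕ) : ℕ := if w % 2 = 1 then w / 2 else t + w / 2

def ppf (t w : ℕ) : ℕ := w + t - kk t w

def labf (K t w : ℕ) : Fin 5 → ℕ
  | 0 => 1 + kk t w
  | 1 => K + 1 + ppf t w
  | 2 => 5*K - kk t w
  | 3 => 4*K - ppf t w
  | 4 => 3*K - w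

def uV {r s : ℕ} : BladeT r s → DFVert r s
  | .inl (i, c, j) => .inl (i, .inl (c, j, 0))
  | .inr j => .inr (.inl (j, 0))

def wV {r s : ℕ} : BladeT r s → DFVert r s
  | .inl (i, c, j) => .inl (i, .inl (c, j, 1))
  | .inr j => .inr (.inl (j, 1))

def vV {r s : ℕ} : BladeT r s → DFVert r s
  | .inl (i, c, j) => .inl (i, .inl (c, j, 2))
  | .inr j => .inr (.inl (j, 2))

def hEV {r s : ℕ} : BladeT r s → DFVert r s
  | .inl (i, c, _) => .inl (i, .inr c)
  | .inr _ => .inr (.inr 0)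

def hMV {r s : ℕ} : BladeT r s → DFVert r s
  | .inl (i, c, _) => .inl (i, .inr (c + 1))
  | .inr _ => .inr (.inr 0)

def eps {r s : ℕ} (b : BladeT r s) : Fin 5 → Sym2 (DFVert r s)
  | 0 => s(uV b, wV b)
  | 1 => s(wV b, vV b)
  | 2 => s(uV b, hEV b)
  | 3 => s(vV b, hEV b)
  | 4 => s(wV b, hMV b)

def fLab (r s t : ℕ) (E : Sym2 (DFVert r s)) : ℕ :=
  ∑ p : BladeT r s × Fin 5,
    if eps p.1 p.2 = E then labf (s*(2*r+1)) t (wB r p.1) p.2 else 0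


-- ============ numeric lemmas ============
lemma kk_lt {t w K : ℕ} (hK : K = 2*t+1) (hw : w < K) : kk t w < K := by
  unfold kk; split <;> omega

lemma ppf_eq (t w : ℕ) : ppf t w = if w % 2 = 1 then t + (w+1)/2 else w / 2 := by
  unfold ppf kk; split <;> omega

lemma ppf_lt {t w K : ℕ} (hK : K = 2*t+1) (hw : w < K) : ppf t w < K := by
  rw [ppf_eq]; split <;> omega

lemma kk_add_ppf (t w : ℕ) : kk t w + ppf t w = w + t := by
  unfold ppf kk; split <;> omega

lemma kk_inj {t K : ℕ} (hK : K = 2*t+1) {w w' : ℕ} (h : w < K) (h' : w' < K)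
    (he : kk t w = kk t w') : w = w' := by
  unfold kk at he; split at he <;> split at he <;> omega

lemma ppf_inj {t K : ℕ} (hK : K = 2*t+1) {w w' : ℕ} (h : w < K) (h' : w' < K)
    (he : ppf t w = ppf t w') : w = w' := by
  rw [ppf_eq] at he; rw [ppf_eq] at he
  split at he <;> split at he <;> omega

lemma kk_surj {t K : ℕ} (hK : K = 2*t+1) {n : ℕ} (hn : n < K) :
    ∃ w, w < K ∧ kk t w = n := by
  by_cases h : n < t
  · exact ⟨2*n+1, by omega, by unfold kk; split <;> omega⟩
  · exact ⟨2*(n-t), by omega, by unfold kk; split <;> omega⟩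

lemma ppf_surj {t K : ℕ} (hK : K = 2*t+1) {n : ℕ} (hn : n < K) :
    ∃ w, w < K ∧ ppf t w = n := by
  by_cases h : n ≤ t
  · exact ⟨2*n, by omega, by rw [ppf_eq]; split <;> omega⟩
  · exact ⟨2*(n-t)-1, by omega, by rw [ppf_eq]; split <;> omega⟩

-- ============ blade index lemmas ============
section Blades
variable {r s : ℕ}

lemma bIx_lt (hr : 1 ≤ r) (b : BladeT r s) : bIx r b < 2*r+1 := by
  rcases b with ⟨i, c, j⟩ | j
  · have := i.isLt; simp only [bIx]; split <;> omega
  · simp only [bIx]; omega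

lemma jIx_lt (hs : 1 ≤ s) (b : BladeT r s) : jIx b < s := by
  rcases b with ⟨i, c, j⟩ | j <;> exact j.isLt

lemma mul_add_lt' {j m bb s : ℕ} (hj : j < s) (hb : bb < m) : j*m + bb < s*m := by
  calc j*m + bb < (j+1)*m := by rw [add_mul]; omega
  _ ≤ s*m := Nat.mul_le_mul_right m hj

lemma wB_lt (hr : 1 ≤ r) (hs : 1 ≤ s) (b : BladeT r s) : wB r b < s*(2*r+1) :=
  mul_add_lt' (jIx_lt hs b) (bIx_lt hr b)

lemma mul_add_inj {j j' m bb bb' : ℕ} (hb : bb < m) (hb' : bb' < m)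
    (h : j*m + bb = j'*m + bb') : j = j' ∧ bb = bb' := by
  have e1 : bb = bb' := by
    have := congrArg (· % m) h
    rw [Nat.mul_add_mod', Nat.mul_add_mod', Nat.mod_eq_of_lt hb, Nat.mod_eq_of_lt hb'] at this
    exact this
  subst e1
  have e2 : j * m = j' * m := by omega
  have hm : 0 < m := by omega
  exact ⟨Nat.eq_of_mul_eq_mul_right hm e2, rfl⟩

lemma wB_inj (hr : 1 ≤ r) {b b' : BladeT r s} (h : wB r b = wB r b') : b = b' := by
  unfold wB at h
  have hb := bIx_lt (s := s) hr b
  have hb' := bIx_lt (s := s) hr b'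
  obtain ⟨hj, hbb⟩ := mul_add_inj hb hb' h
  rcases b with ⟨i, c, j⟩ | j <;> rcases b' with ⟨i', c', j'⟩ | j' <;>
    simp only [bIx, jIx] at hj hbb
  · have h1 := i.isLt; have h2 := i'.isLt; have h3 := c.isLt; have h4 := c'.isLt
    have key : (i:ℕ) = (i':ℕ) ∧ (c:ℕ) = (c':ℕ) := by split_ifs at hbb <;> omega
    simp only [Sum.inl.injEq, Prod.mk.injEq, Fin.ext_iff]
    exact ⟨key.1, key.2, hj⟩
  · exfalso; have h1 := i.isLt; split_ifs at hbb <;> omega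
  · exfalso; have h1 := i'.isLt; split_ifs at hbb <;> omega
  · simp only [Sum.inr.injEq, Fin.ext_iff]; exact hj

lemma wB_surj (hr : 1 ≤ r) (hs : 1 ≤ s) {n : ℕ} (hn : n < s*(2*r+1)) :
    ∃ b : BladeT r s, wB r b = n := by
  have hm0 : 0 < 2*r+1 := by omega
  have hj : n / (2*r+1) < s := Nat.div_lt_of_lt_mul (by rw [Nat.mul_comm] at hn; exact hn)
  have hbb : n % (2*r+1) < 2*r+1 := Nat.mod_lt _ hm0
  have hrec : n / (2*r+1) * (2*r+1) + n % (2*r+1) = n := by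
    rw [Nat.mul_comm]; exact Nat.div_add_mod n (2*r+1)
  rcases lt_trichotomy (n % (2*r+1)) r with h | h | h
  · refine ⟨.inl (⟨n % (2*r+1), h⟩, 0, ⟨n / (2*r+1), hj⟩), ?_⟩
    simp only [wB, jIx, bIx]
    norm_num
    omega
  · exact ⟨.inr ⟨n / (2*r+1), hj⟩, by show n / (2*r+1) * (2*r+1) + r = n; omega⟩
  · refine ⟨.inl (⟨2*r - n % (2*r+1), by omega⟩, 1, ⟨n / (2*r+1), hj⟩), ?_⟩
    simp only [wB, jIx, bIx]
    norm_num
    omega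

end Blades


-- ============ label map ============
section Labels
variable {r s t : ℕ}

def labP (r s t : ℕ) (p : BladeT r s × Fin 5) : ℕ :=
  labf (s*(2*r+1)) t (wB r p.1) p.2

lemma labP_inj (hr : 1 ≤ r) (hs : 1 ≤ s) (hK : s*(2*r+1) = 2*t+1) :
    Function.Injective (labP r s t) := by
  rintro ⟨b, e⟩ ⟨b', e'⟩ h
  have hw := wB_lt hr hs b
  have hw' := wB_lt hr hs b'
  have h1 := kk_lt hK hw
  have h2 := kk_lt hK hw'
  have h3 := ppf_lt hK hw
  have h4 := ppf_lt hK hw'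
  unfold labP at h
  fin_cases e <;> fin_cases e' <;> simp only [labf] at h ⊢
  all_goals try (exfalso; omega)
  · obtain rfl := wB_inj hr (kk_inj hK hw hw' (by omega)); rfl
  · obtain rfl := wB_inj hr (ppf_inj hK hw hw' (by omega)); rfl
  · obtain rfl := wB_inj hr (kk_inj hK hw hw' (by omega)); rfl
  · obtain rfl := wB_inj hr (ppf_inj hK hw hw' (by omega)); rfl
  · obtain rfl := wB_inj hr (by omega : wB r b = wB r b'); rfl

lemma labP_bounds (hr : 1 ≤ r) (hs : 1 ≤ s) (hK : s*(2*r+1) = 2*t+1)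
    (p : BladeT r s × Fin 5) : 1 ≤ labP r s t p ∧ labP r s t p ≤ 5*(s*(2*r+1)) := by
  obtain ⟨b, e⟩ := p
  have hw := wB_lt hr hs b
  have h1 := kk_lt hK hw
  have h3 := ppf_lt hK hw
  unfold labP
  fin_cases e <;> simp only [labf] <;> omega

lemma labP_surj (hr : 1 ≤ r) (hs : 1 ≤ s) (hK : s*(2*r+1) = 2*t+1)
    {n : ℕ} (h1 : 1 ≤ n) (h2 : n ≤ 5*(s*(2*r+1))) : ∃ p, labP r s t p = n := by
  set K := s*(2*r+1) with hKdef
  rcases Nat.lt_or_ge n (K+1) with h | h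
  · obtain ⟨w, hw, hkk⟩ := kk_surj hK (show n - 1 < K by omega)
    obtain ⟨b, hb⟩ := wB_surj hr hs hw
    exact ⟨(b, 0), by unfold labP; simp only [labf]; rw [hb, hkk]; omega⟩
  rcases Nat.lt_or_ge n (2*K+1) with h' | h'
  · obtain ⟨w, hw, hkk⟩ := ppf_surj hK (show n - K - 1 < K by omega)
    obtain ⟨b, hb⟩ := wB_surj hr hs hw
    exact ⟨(b, 1), by unfold labP; simp only [labf]; rw [hb, hkk]; omega⟩
  rcases Nat.lt_or_ge n (3*K+1) with h'' | h''
  · obtain ⟨b, hb⟩ := wB_surj hr hs (show 3*K - n < K by omega)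
    exact ⟨(b, 4), by unfold labP; simp only [labf]; rw [hb]; omega⟩
  rcases Nat.lt_or_ge n (4*K+1) with h3 | h3
  · obtain ⟨w, hw, hkk⟩ := ppf_surj hK (show 4*K - n < K by omega)
    obtain ⟨b, hb⟩ := wB_surj hr hs hw
    exact ⟨(b, 3), by unfold labP; simp only [labf]; rw [hb, hkk]; omega⟩
  · obtain ⟨w, hw, hkk⟩ := kk_surj hK (show 5*K - n < K by omega)
    obtain ⟨b, hb⟩ := wB_surj hr hs hw
    exact ⟨(b, 2), by unfold labP; simp only [labf]; rw [hb, hkk]; omega⟩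

end Labels

-- ============ vertex discrimination ============
section Verts
variable {r s : ℕ}

def pr : DFVert r s → ℕ
  | .inl (_, .inl (_, _, pos)) => (pos : ℕ)
  | .inl (_, .inr _) => 3
  | .inr (.inl (_, pos)) => (pos : ℕ)
  | .inr (.inr _) => 3

@[simp] lemma pr_uV (b : BladeT r s) : pr (uV b) = 0 := by rcases b with ⟨i,c,j⟩|j <;> rfl
@[simp] lemma pr_wV (b : BladeT r s) : pr (wV b) = 1 := by rcases b with ⟨i,c,j⟩|j <;> rfl
@[simp] lemma pr_vV (b : BladeT r s) : pr (vV b) = 2 := by rcases b with ⟨i,c,j⟩|j <;> rfl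
@[simp] lemma pr_hEV (b : BladeT r s) : pr (hEV b) = 3 := by rcases b with ⟨i,c,j⟩|j <;> rfl
@[simp] lemma pr_hMV (b : BladeT r s) : pr (hMV b) = 3 := by rcases b with ⟨i,c,j⟩|j <;> rfl

lemma uV_inj : Function.Injective (uV (r := r) (s := s)) := by
  rintro (⟨i,c,j⟩|j) (⟨i',c',j'⟩|j') h <;> simp_all [uV]

lemma wV_inj : Function.Injective (wV (r := r) (s := s)) := by
  rintro (⟨i,c,j⟩|j) (⟨i',c',j'⟩|j') h <;> simp_all [wV]

lemma vV_inj : Function.Injective (vV (r := r) (s := s)) := by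
  rintro (⟨i,c,j⟩|j) (⟨i',c',j'⟩|j') h <;> simp_all [vV]

lemma eps_inj : ∀ {b b' : BladeT r s} {e e' : Fin 5},
    eps b e = eps b' e' → b = b' ∧ e = e' := by
  intro b b' e e' h
  fin_cases e <;> fin_cases e' <;> simp only [eps] at h <;> rw [Sym2.eq_iff] at h <;>
  (rcases h with ⟨h1, h2⟩ | ⟨h1, h2⟩ <;>
    first
      | (simpa using congrArg pr h1)
      | (simpa using congrArg pr h2)
      | (exact ⟨uV_inj h1, rfl⟩)
      | (exact ⟨wV_inj h1, rfl⟩)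
      | (exact ⟨vV_inj h1, rfl⟩))

end Verts


-- ============ adjacency characterization ============
section Adj
variable {r s : ℕ}

lemma DF_adj_inl_inl (i i' : Fin r) (a a' : (Fin 2 × Fin s × Fin 3) ⊕ Fin 2) :
    (DF r s).Adj (Sum.inl (i, a)) (Sum.inl (i', a')) ↔ i = i' ∧ (DF2 s).Adj a a' := by
  simp only [DF, disjUnionG, copies, SimpleGraph.fromRel_adj]
  constructor
  · rintro ⟨hne, ⟨hne2, ⟨rfl, h⟩ | ⟨rfl, h⟩⟩ | ⟨hne2, ⟨rfl, h⟩ | ⟨rfl, h⟩⟩⟩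
    · exact ⟨rfl, h⟩
    · exact ⟨rfl, h.symm⟩
    · exact ⟨rfl, h.symm⟩
    · exact ⟨rfl, h⟩
  · rintro ⟨rfl, h⟩
    exact ⟨by simp [h.ne], Or.inl ⟨by simp [h.ne], Or.inl ⟨rfl, h⟩⟩⟩

lemma DF_adj_inl_inr (p q) :
    (DF r s).Adj (Sum.inl p) (Sum.inr q) ↔ False := by
  simp [DF, disjUnionG, SimpleGraph.fromRel_adj]

lemma DF_adj_inr_inl (p q) :
    (DF r s).Adj (Sum.inr q) (Sum.inl p) ↔ False := by
  simp [DF, disjUnionG, SimpleGraph.fromRel_adj]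

lemma DF_adj_inr_inr (z z') :
    (DF r s).Adj (Sum.inr z) (Sum.inr z') ↔ (FB s).Adj z z' := by
  simp only [DF, disjUnionG, SimpleGraph.fromRel_adj]
  constructor
  · rintro ⟨hne, h | h⟩
    · exact h
    · exact h.symm
  · intro h
    exact ⟨by simpa using h.ne, Or.inl h⟩

lemma FB_adj_inl_inl (p p' : Fin s × Fin 3) :
    (FB s).Adj (Sum.inl p) (Sum.inl p') ↔ (nP3 s).Adj p p' := by
  simp only [FB, joinG, SimpleGraph.fromRel_adj]
  constructor
  · rintro ⟨hne, h | h⟩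
    · exact h
    · exact h.symm
  · intro h
    exact ⟨by simpa using h.ne, Or.inl h⟩

lemma FB_adj_inl_inr (p : Fin s × Fin 3) (k : Fin 1) :
    (FB s).Adj (Sum.inl p) (Sum.inr k) ↔ True := by
  simp [FB, joinG, SimpleGraph.fromRel_adj]

lemma FB_adj_inr_inl (p : Fin s × Fin 3) (k : Fin 1) :
    (FB s).Adj (Sum.inr k) (Sum.inl p) ↔ True := by
  simp [FB, joinG, SimpleGraph.fromRel_adj]

lemma FB_adj_inr_inr (k k' : Fin 1) :
    (FB s).Adj (Sum.inr k) (Sum.inr k') ↔ False := by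
  simp [FB, joinG, SimpleGraph.fromRel_adj]

lemma nP3_adj (p q : Fin s × Fin 3) :
    (nP3 s).Adj p q ↔ p.1 = q.1 ∧
      ((p.2 = 0 ∧ q.2 = 1) ∨ (p.2 = 1 ∧ q.2 = 2) ∨
       (q.2 = 0 ∧ p.2 = 1) ∨ (q.2 = 1 ∧ p.2 = 2)) := by
  simp only [nP3, SimpleGraph.fromRel_adj]
  constructor
  · rintro ⟨hne, ⟨h1, h2⟩ | ⟨h1, h2⟩⟩
    · exact ⟨h1, by tauto⟩
    · exact ⟨h1.symm, by tauto⟩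
  · rintro ⟨h1, h2⟩
    refine ⟨?_, ?_⟩
    · intro hpq
      subst hpq
      rcases h2 with ⟨x, y⟩ | ⟨x, y⟩ | ⟨x, y⟩ | ⟨x, y⟩ <;> rw [x] at y <;> exact absurd y (by decide)
    · tauto

lemma DF2_adj_inl_inl (a b : Fin 2 × Fin s × Fin 3) :
    (DF2 s).Adj (Sum.inl a) (Sum.inl b) ↔ a.1 = b.1 ∧ a.2.1 = b.2.1 ∧
      ((a.2.2 = 0 ∧ b.2.2 = 1) ∨ (a.2.2 = 1 ∧ b.2.2 = 2) ∨
       (b.2.2 = 0 ∧ a.2.2 = 1) ∨ (b.2.2 = 1 ∧ a.2.2 = 2)) := by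
  simp only [DF2, SimpleGraph.fromRel_adj]
  constructor
  · rintro ⟨hne, ⟨h1, h2, h3⟩ | ⟨h1, h2, h3⟩⟩
    · exact ⟨h1, h2, by tauto⟩
    · exact ⟨h1.symm, h2.symm, by tauto⟩
  · rintro ⟨h1, h2, h3⟩
    refine ⟨?_, ?_⟩
    · intro hab
      obtain rfl := Sum.inl.inj hab
      rcases h3 with ⟨x, y⟩ | ⟨x, y⟩ | ⟨x, y⟩ | ⟨x, y⟩ <;> rw [x] at y <;> exact absurd y (by decide)
    · tauto

lemma DF2_adj_inl_inr (a : Fin 2 × Fin s × Fin 3) (h2 : Fin 2) :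
    (DF2 s).Adj (Sum.inl a) (Sum.inr h2) ↔
      ((h2 = 0 ∧ ((a.1 = 0 ∧ a.2.2 ≠ 1) ∨ (a.1 = 1 ∧ a.2.2 = 1))) ∨
       (h2 = 1 ∧ ((a.1 = 1 ∧ a.2.2 ≠ 1) ∨ (a.1 = 0 ∧ a.2.2 = 1)))) := by
  simp only [DF2, SimpleGraph.fromRel_adj]
  constructor
  · rintro ⟨hne, h | h⟩
    · exact h
    · exact h.elim
  · intro h
    exact ⟨by simp, Or.inl h⟩

lemma DF2_adj_inr_inl (a : Fin 2 × Fin s × Fin 3) (h2 : Fin 2) :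
    (DF2 s).Adj (Sum.inr h2) (Sum.inl a) ↔ (DF2 s).Adj (Sum.inl a) (Sum.inr h2) :=
  ⟨fun h => h.symm, fun h => h.symm⟩

lemma DF2_adj_inr_inr (h2 h2' : Fin 2) :
    (DF2 s).Adj (Sum.inr h2) (Sum.inr h2') ↔ False := by
  simp [DF2, SimpleGraph.fromRel_adj]

end Adj

-- ============ edge set = range eps ============
section EdgeSet
variable {r s : ℕ}

lemma eps_mem (b : BladeT r s) (e : Fin 5) : eps b e ∈ (DF r s).edgeSet := by
  rcases b with ⟨i, c, j⟩ | j <;> fin_cases e <;>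
    simp only [eps, uV, wV, vV, hEV, hMV, SimpleGraph.mem_edgeSet, DF_adj_inl_inl,
      DF_adj_inr_inr, FB_adj_inl_inl, FB_adj_inl_inr, nP3_adj, DF2_adj_inl_inl,
      DF2_adj_inl_inr] <;>
    first
      | trivial
      | decide
      | (fin_cases c <;> decide)

lemma adj_cases {x y : DFVert r s} (h : (DF r s).Adj x y) :
    ∃ p : BladeT r s × Fin 5, s(x, y) = eps p.1 p.2 := by
  rcases x with ⟨i, a⟩ | z
  · rcases y with ⟨i', a'⟩ | z'
    · rw [DF_adj_inl_inl] at h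
      obtain ⟨rfl, h⟩ := h
      rcases a with ⟨c, j, pos⟩ | hb
      · rcases a' with ⟨c', j', pos'⟩ | hb'
        · rw [DF2_adj_inl_inl] at h
          obtain ⟨hc, hj, hpos⟩ := h
          obtain rfl : c = c' := hc
          obtain rfl : j = j' := hj
          rcases hpos with ⟨h1, h2⟩ | ⟨h1, h2⟩ | ⟨h1, h2⟩ | ⟨h1, h2⟩
          · obtain rfl : pos = 0 := h1; obtain rfl : pos' = 1 := h2
            exact ⟨(.inl (i, c, j), 0), rfl⟩
          · obtain rfl : pos = 1 := h1; obtain rfl : pos' = 2 := h2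
            exact ⟨(.inl (i, c, j), 1), rfl⟩
          · obtain rfl : pos' = 0 := h1; obtain rfl : pos = 1 := h2
            exact ⟨(.inl (i, c, j), 0), Sym2.eq_swap⟩
          · obtain rfl : pos' = 1 := h1; obtain rfl : pos = 2 := h2
            exact ⟨(.inl (i, c, j), 1), Sym2.eq_swap⟩
        · rw [DF2_adj_inl_inr] at h
          fin_cases pos <;> simp only [] at h <;>
            rcases h with ⟨rfl, ⟨rfl, h2⟩ | ⟨rfl, h2⟩⟩ | ⟨rfl, ⟨rfl, h2⟩ | ⟨rfl, h2⟩⟩ <;>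
            first
              | exact absurd h2 (by decide)
              | exact ⟨(.inl (i, 0, j), 2), rfl⟩
              | exact ⟨(.inl (i, 1, j), 2), rfl⟩
              | exact ⟨(.inl (i, 0, j), 3), rfl⟩
              | exact ⟨(.inl (i, 1, j), 3), rfl⟩
              | exact ⟨(.inl (i, 0, j), 4), by rfl⟩
              | exact ⟨(.inl (i, 1, j), 4), by rfl⟩
      · rcases a' with ⟨c', j', pos'⟩ | hb'
        · rw [DF2_adj_inr_inl, DF2_adj_inl_inr] at h
          fin_cases pos' <;> simp only [] at h <;>
            rcases h with ⟨rfl, ⟨rfl, h2⟩ | ⟨rfl, h2⟩⟩ | ⟨rfl, ⟨rfl, h2⟩ | ⟨rfl, h2⟩⟩ <;>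
            first
              | exact absurd h2 (by decide)
              | exact ⟨(.inl (i, 0, j'), 2), Sym2.eq_swap⟩
              | exact ⟨(.inl (i, 1, j'), 2), Sym2.eq_swap⟩
              | exact ⟨(.inl (i, 0, j'), 3), Sym2.eq_swap⟩
              | exact ⟨(.inl (i, 1, j'), 3), Sym2.eq_swap⟩
              | exact ⟨(.inl (i, 0, j'), 4), Sym2.eq_swap⟩
              | exact ⟨(.inl (i, 1, j'), 4), Sym2.eq_swap⟩
        · rw [DF2_adj_inr_inr] at h; exact h.elim
    · rw [DF_adj_inl_inr] at h; exact h.elim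
  · rcases y with ⟨i', a'⟩ | z'
    · rw [DF_adj_inr_inl] at h; exact h.elim
    · rw [DF_adj_inr_inr] at h
      rcases z with ⟨j, pos⟩ | k
      · rcases z' with ⟨j', pos'⟩ | k'
        · rw [FB_adj_inl_inl, nP3_adj] at h
          obtain ⟨hj, hpos⟩ := h
          obtain rfl : j = j' := hj
          rcases hpos with ⟨h1, h2⟩ | ⟨h1, h2⟩ | ⟨h1, h2⟩ | ⟨h1, h2⟩
          · obtain rfl : pos = 0 := h1; obtain rfl : pos' = 1 := h2
            exact ⟨(.inr j, 0), rfl⟩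
          · obtain rfl : pos = 1 := h1; obtain rfl : pos' = 2 := h2
            exact ⟨(.inr j, 1), rfl⟩
          · obtain rfl : pos' = 0 := h1; obtain rfl : pos = 1 := h2
            exact ⟨(.inr j, 0), Sym2.eq_swap⟩
          · obtain rfl : pos' = 1 := h1; obtain rfl : pos = 2 := h2
            exact ⟨(.inr j, 1), Sym2.eq_swap⟩
        · obtain rfl : k' = 0 := Subsingleton.elim _ _
          fin_cases pos
          · exact ⟨(.inr j, 2), rfl⟩
          · exact ⟨(.inr j, 4), rfl⟩
          · exact ⟨(.inr j, 3), rfl⟩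
      · rcases z' with ⟨j', pos'⟩ | k'
        · obtain rfl : k = 0 := Subsingleton.elim _ _
          fin_cases pos'
          · exact ⟨(.inr j', 2), Sym2.eq_swap⟩
          · exact ⟨(.inr j', 4), Sym2.eq_swap⟩
          · exact ⟨(.inr j', 3), Sym2.eq_swap⟩
        · rw [FB_adj_inr_inr] at h; exact h.elim

lemma edgeSet_eq : (DF r s).edgeSet = Set.range (fun p : BladeT r s × Fin 5 => eps p.1 p.2) := by
  ext e
  constructor
  · intro he
    induction e using Sym2.ind with
    | _ x y =>
      obtain ⟨p, hp⟩ := adj_cases ((SimpleGraph.mem_edgeSet _).mp he)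
      exact ⟨p, hp.symm⟩
  · rintro ⟨p, rfl⟩
    exact eps_mem p.1 p.2

end EdgeSet

-- ============ vertex equalities and membership ============
section Mem
variable {r s : ℕ}

@[simp] lemma uV_eq_uV (b b' : BladeT r s) : uV b = uV b' ↔ b = b' := uV_inj.eq_iff
@[simp] lemma wV_eq_wV (b b' : BladeT r s) : wV b = wV b' ↔ b = b' := wV_inj.eq_iff
@[simp] lemma vV_eq_vV (b b' : BladeT r s) : vV b = vV b' ↔ b = b' := vV_inj.eq_iff
@[simp] lemma uV_eq_wV (b b' : BladeT r s) : uV b = wV b' ↔ False :=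
  iff_false_intro (fun h => by simpa using congrArg pr h)
@[simp] lemma uV_eq_vV (b b' : BladeT r s) : uV b = vV b' ↔ False :=
  iff_false_intro (fun h => by simpa using congrArg pr h)
@[simp] lemma uV_eq_hEV (b b' : BladeT r s) : uV b = hEV b' ↔ False :=
  iff_false_intro (fun h => by simpa using congrArg pr h)
@[simp] lemma uV_eq_hMV (b b' : BladeT r s) : uV b = hMV b' ↔ False :=
  iff_false_intro (fun h => by simpa using congrArg pr h)
@[simp] lemma wV_eq_uV (b b' : BladeT r s) : wV b = uV b' ↔ False :=
  iff_false_intro (fun h => by simpa using congrArg pr h)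
@[simp] lemma wV_eq_vV (b b' : BladeT r s) : wV b = vV b' ↔ False :=
  iff_false_intro (fun h => by simpa using congrArg pr h)
@[simp] lemma wV_eq_hEV (b b' : BladeT r s) : wV b = hEV b' ↔ False :=
  iff_false_intro (fun h => by simpa using congrArg pr h)
@[simp] lemma wV_eq_hMV (b b' : BladeT r s) : wV b = hMV b' ↔ False :=
  iff_false_intro (fun h => by simpa using congrArg pr h)
@[simp] lemma vV_eq_uV (b b' : BladeT r s) : vV b = uV b' ↔ False :=
  iff_false_intro (fun h => by simpa using congrArg pr h)
@[simp] lemma vV_eq_wV (b b' : BladeT r s) : vV b = wV b' ↔ False :=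
  iff_false_intro (fun h => by simpa using congrArg pr h)
@[simp] lemma vV_eq_hEV (b b' : BladeT r s) : vV b = hEV b' ↔ False :=
  iff_false_intro (fun h => by simpa using congrArg pr h)
@[simp] lemma vV_eq_hMV (b b' : BladeT r s) : vV b = hMV b' ↔ False :=
  iff_false_intro (fun h => by simpa using congrArg pr h)
@[simp] lemma hEV_eq_uV (b b' : BladeT r s) : hEV b = uV b' ↔ False :=
  iff_false_intro (fun h => by simpa using congrArg pr h)
@[simp] lemma hEV_eq_wV (b b' : BladeT r s) : hEV b = wV b' ↔ False :=
  iff_false_intro (fun h => by simpa using congrArg pr h)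
@[simp] lemma hEV_eq_vV (b b' : BladeT r s) : hEV b = vV b' ↔ False :=
  iff_false_intro (fun h => by simpa using congrArg pr h)
@[simp] lemma hMV_eq_uV (b b' : BladeT r s) : hMV b = uV b' ↔ False :=
  iff_false_intro (fun h => by simpa using congrArg pr h)
@[simp] lemma hMV_eq_wV (b b' : BladeT r s) : hMV b = wV b' ↔ False :=
  iff_false_intro (fun h => by simpa using congrArg pr h)
@[simp] lemma hMV_eq_vV (b b' : BladeT r s) : hMV b = vV b' ↔ False :=
  iff_false_intro (fun h => by simpa using congrArg pr h)

lemma mem_eps_uV (b0 : BladeT r s) (p : BladeT r s × Fin 5) :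
    uV b0 ∈ eps p.1 p.2 ↔ p = (b0, 0) ∨ p = (b0, 2) := by
  obtain ⟨b, e⟩ := p
  fin_cases e <;>
    simp [eps, Sym2.mem_iff, Prod.ext_iff, eq_comm (a := b0)] <;> decide

lemma mem_eps_wV (b0 : BladeT r s) (p : BladeT r s × Fin 5) :
    wV b0 ∈ eps p.1 p.2 ↔ p = (b0, 0) ∨ p = (b0, 1) ∨ p = (b0, 4) := by
  obtain ⟨b, e⟩ := p
  fin_cases e <;>
    simp [eps, Sym2.mem_iff, Prod.ext_iff, eq_comm (a := b0)] <;> decide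

lemma mem_eps_vV (b0 : BladeT r s) (p : BladeT r s × Fin 5) :
    vV b0 ∈ eps p.1 p.2 ↔ p = (b0, 1) ∨ p = (b0, 3) := by
  obtain ⟨b, e⟩ := p
  fin_cases e <;>
    simp [eps, Sym2.mem_iff, Prod.ext_iff, eq_comm (a := b0)] <;> decide

end Mem

-- ============ hub membership ============
section HubMem
variable {r s : ℕ}

lemma fin2_add_one : ∀ (c h0 : Fin 2), (c + 1 = h0) ↔ (c = h0 + 1) := by decide

lemma mem_eps_hubD (i0 : Fin r) (h0 : Fin 2) (p : BladeT r s × Fin 5) :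
    (Sum.inl (i0, Sum.inr h0) : DFVert r s) ∈ eps p.1 p.2 ↔
      (∃ j, p = (.inl (i0, h0, j), 2)) ∨ (∃ j, p = (.inl (i0, h0, j), 3)) ∨
      (∃ j, p = (.inl (i0, h0 + 1, j), 4)) := by
  obtain ⟨b, e⟩ := p
  rcases b with ⟨i, c, j⟩ | j <;> fin_cases e <;>
    simp [eps, Sym2.mem_iff, Prod.ext_iff, uV, wV, vV, hEV, hMV, fin2_add_one,
      and_comm, eq_comm (a := i0), eq_comm (a := h0)]

lemma mem_eps_hubX (p : BladeT r s × Fin 5) :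
    (Sum.inr (Sum.inr 0) : DFVert r s) ∈ eps p.1 p.2 ↔
      (∃ j, p = (.inr j, 2)) ∨ (∃ j, p = (.inr j, 3)) ∨ (∃ j, p = (.inr j, 4)) := by
  obtain ⟨b, e⟩ := p
  rcases b with ⟨i, c, j⟩ | j <;> fin_cases e <;>
    simp [eps, Sym2.mem_iff, Prod.ext_iff, uV, wV, vV, hEV, hMV]

end HubMem

-- ============ fLab and fplus ============
section Fplus
variable {r s t : ℕ}

instance instDecMemEps (v : DFVert r s) :
    DecidablePred (fun p : BladeT r s × Fin 5 => v ∈ eps p.1 p.2) :=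
  fun p => Sym2.Mem.decidable v (eps p.1 p.2)

lemma eps_pair_inj : Function.Injective (fun p : BladeT r s × Fin 5 => eps p.1 p.2) := by
  intro p q h
  obtain ⟨h1, h2⟩ := eps_inj h
  exact Prod.ext h1 h2

lemma fLab_eps (b : BladeT r s) (e : Fin 5) :
    fLab r s t (eps b e) = labP r s t (b, e) := by
  unfold fLab
  rw [Finset.sum_eq_single_of_mem (b, e) (Finset.mem_univ _)]
  · rw [if_pos rfl]; rfl
  · intro q _ hq
    rw [if_neg]
    intro hcontra
    exact hq (eps_pair_inj hcontra)

lemma incidenceSet_eq (v : DFVert r s) :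
    (DF r s).incidenceSet v =
      (fun p : BladeT r s × Fin 5 => eps p.1 p.2) '' {p | v ∈ eps p.1 p.2} := by
  ext e
  simp only [SimpleGraph.incidenceSet, Set.mem_setOf_eq, Set.mem_image, edgeSet_eq]
  constructor
  · rintro ⟨⟨p, rfl⟩, hv⟩
    exact ⟨p, hv, rfl⟩
  · rintro ⟨p, hv, rfl⟩
    exact ⟨⟨p, rfl⟩, hv⟩

lemma fplus_eq (v : DFVert r s) :
    fplus (DF r s) (fLab r s t) v =
      ∑ p ∈ Finset.univ.filter (fun p : BladeT r s × Fin 5 => v ∈ eps p.1 p.2),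
        labP r s t p := by
  unfold fplus
  rw [incidenceSet_eq]
  rw [finsum_mem_image (eps_pair_inj.injOn)]
  have hset : {p : BladeT r s × Fin 5 | v ∈ eps p.1 p.2} =
      ↑(Finset.univ.filter (fun p : BladeT r s × Fin 5 => v ∈ eps p.1 p.2)) := by
    ext p; simp
  rw [hset, finsum_mem_coe_finset]
  exact Finset.sum_congr rfl (fun p _ => fLab_eps p.1 p.2)

end Fplus

-- ============ fplus values ============
section FplusVals
variable {r s t : ℕ}

lemma fplus_uV (hr : 1 ≤ r) (hs : 1 ≤ s) (hK : s*(2*r+1) = 2*t+1) (b0 : BladeT r s) :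
    fplus (DF r s) (fLab r s t) (uV b0) = 5*(s*(2*r+1)) + 1 := by
  rw [fplus_eq]
  have hfil : Finset.univ.filter (fun p : BladeT r s × Fin 5 => uV b0 ∈ eps p.1 p.2) =
      {(b0, 0), (b0, 2)} := by
    ext p; simp [mem_eps_uV]
  rw [hfil, Finset.sum_insert (by simp), Finset.sum_singleton]
  have hw := wB_lt hr hs b0
  have h1 := kk_lt hK hw
  simp only [labP, labf]
  omega

lemma fplus_vV (hr : 1 ≤ r) (hs : 1 ≤ s) (hK : s*(2*r+1) = 2*t+1) (b0 : BladeT r s) :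
    fplus (DF r s) (fLab r s t) (vV b0) = 5*(s*(2*r+1)) + 1 := by
  rw [fplus_eq]
  have hfil : Finset.univ.filter (fun p : BladeT r s × Fin 5 => vV b0 ∈ eps p.1 p.2) =
      {(b0, 1), (b0, 3)} := by
    ext p; simp [mem_eps_vV]
  rw [hfil, Finset.sum_insert (by simp), Finset.sum_singleton]
  have hw := wB_lt hr hs b0
  have h1 := ppf_lt hK hw
  simp only [labP, labf]
  omega

lemma fplus_wV (hr : 1 ≤ r) (hs : 1 ≤ s) (hK : s*(2*r+1) = 2*t+1) (b0 : BladeT r s) :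
    fplus (DF r s) (fLab r s t) (wV b0) = 4*(s*(2*r+1)) + t + 2 := by
  rw [fplus_eq]
  have hfil : Finset.univ.filter (fun p : BladeT r s × Fin 5 => wV b0 ∈ eps p.1 p.2) =
      {(b0, 0), (b0, 1), (b0, 4)} := by
    ext p; simp [mem_eps_wV]
  rw [hfil, Finset.sum_insert (by simp), Finset.sum_insert (by simp), Finset.sum_singleton]
  have hw := wB_lt hr hs b0
  have h1 := kk_lt hK hw
  have h2 := ppf_lt hK hw
  have h3 := kk_add_ppf t (wB r b0)
  simp only [labP, labf]
  omega

end FplusVals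

-- ============ hub sums ============
section HubSums
variable {r s t : ℕ}

lemma sj2 (s : ℕ) : 2 * (∑ j : Fin s, (j:ℕ)) + s = s*s := by
  have hrw : ∑ j : Fin s, (j:ℕ) = ∑ j ∈ Finset.range s, j :=
    Fin.sum_univ_eq_sum_range (fun x => x) s
  rw [hrw]
  cases s with
  | zero => simp
  | succ n =>
    have h := Finset.sum_range_id_mul_two (n+1)
    simp only [Nat.succ_sub_one] at h
    have h2 : (n+1)*(n+1) = (n+1)*n + (n+1) := by ring
    omega

lemma sum_lab23 (hr : 1 ≤ r) (hs : 1 ≤ s) (hK : s*(2*r+1) = 2*t+1)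
    (bl : Fin s → BladeT r s) :
    (∑ j, labP r s t (bl j, 2)) + (∑ j, labP r s t (bl j, 3)) +
      ((∑ j, wB r (bl j)) + s*t) = s * (9*(s*(2*r+1))) := by
  have hpt : ∀ j : Fin s,
      labP r s t (bl j, 2) + labP r s t (bl j, 3) + (wB r (bl j) + t)
        = 9*(s*(2*r+1)) := by
    intro j
    have hw := wB_lt hr hs (bl j)
    have h1 := kk_lt hK hw
    have h2 := ppf_lt hK hw
    have h3 := kk_add_ppf t (wB r (bl j))
    simp only [labP, labf]
    omega
  have key : ∑ j : Fin s, (labP r s t (bl j, 2) + labP r s t (bl j, 3) + (wB r (bl j) + t))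
      = ∑ _j : Fin s, 9*(s*(2*r+1)) := Finset.sum_congr rfl (fun j _ => hpt j)
  simp only [Finset.sum_add_distrib, Finset.sum_const, Finset.card_univ,
    Fintype.card_fin, smul_eq_mul] at key
  omega

lemma sum_lab4 (hr : 1 ≤ r) (hs : 1 ≤ s) (hK : s*(2*r+1) = 2*t+1)
    (bl : Fin s → BladeT r s) :
    (∑ j, labP r s t (bl j, 4)) + (∑ j, wB r (bl j)) = s * (3*(s*(2*r+1))) := by
  have hpt : ∀ j : Fin s,
      labP r s t (bl j, 4) + wB r (bl j) = 3*(s*(2*r+1)) := by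
    intro j
    have hw := wB_lt hr hs (bl j)
    simp only [labP, labf]
    omega
  have key : ∑ j : Fin s, (labP r s t (bl j, 4) + wB r (bl j))
      = ∑ _j : Fin s, 3*(s*(2*r+1)) := Finset.sum_congr rfl (fun j _ => hpt j)
  simp only [Finset.sum_add_distrib, Finset.sum_const, Finset.card_univ,
    Fintype.card_fin, smul_eq_mul] at key
  omega

lemma sumW (i0 : Fin r) (c : Fin 2) :
    ∑ j : Fin s, wB r (.inl (i0,c,j) : BladeT r s)
      = (∑ j : Fin s, (j:ℕ)) * (2*r+1) + s * (if (c:ℕ) = 0 then (i0:ℕ) else 2*r - (i0:ℕ)) := by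
  simp only [wB, jIx, bIx]
  rw [Finset.sum_add_distrib, ← Finset.sum_mul, Finset.sum_const, Finset.card_univ,
    Fintype.card_fin, smul_eq_mul]

lemma sumWFB : ∑ j : Fin s, wB r (.inr j : BladeT r s)
      = (∑ j : Fin s, (j:ℕ)) * (2*r+1) + s * r := by
  simp only [wB, jIx, bIx]
  rw [Finset.sum_add_distrib, ← Finset.sum_mul, Finset.sum_const, Finset.card_univ,
    Fintype.card_fin, smul_eq_mul]

lemma pairB (i0 : Fin r) (h0 : Fin 2) :
    (if (h0:ℕ) = 0 then (i0:ℕ) else 2*r - (i0:ℕ)) +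
    (if ((h0+1 : Fin 2):ℕ) = 0 then (i0:ℕ) else 2*r - (i0:ℕ)) = 2*r := by
  have := i0.isLt
  fin_cases h0 <;> simp <;> omega

lemma hub_arith (hK : s*(2*r+1) = 2*t+1) {S2 S3 S4 W1 W2 SJ B0 B1 : ℕ}
    (E1 : S2 + S3 + (W1 + s*t) = s * (9*(s*(2*r+1))))
    (E2 : S4 + W2 = s * (3*(s*(2*r+1))))
    (hW1 : W1 = SJ * (2*r+1) + s * B0)
    (hW2 : W2 = SJ * (2*r+1) + s * B1)
    (hB : B0 + B1 = 2*r)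
    (hSJ : 2 * SJ + s = s*s) :
    S2 + S3 + S4 = 10*(s*(s*(2*r+1))) + s*t + 2*s := by
  have hsB : s * B0 + s * B1 = s * (2*r) := by rw [← Nat.left_distrib, hB]
  have hprod : 2*(SJ*(2*r+1)) + s*(2*r+1) = s*(s*(2*r+1)) := by
    calc 2*(SJ*(2*r+1)) + s*(2*r+1) = (2*SJ + s)*(2*r+1) := by ring
    _ = (s*s)*(2*r+1) := by rw [hSJ]
    _ = s*(s*(2*r+1)) := by ring
  have hring1 : s*(9*(s*(2*r+1))) = 9*(s*(s*(2*r+1))) := by ring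
  have hring2 : s*(3*(s*(2*r+1))) = 3*(s*(s*(2*r+1))) := by ring
  have hring3 : s*(2*r) + s = s*(2*r+1) := by ring
  have hst : s*(s*(2*r+1)) = 2*(s*t) + s := by rw [hK]; ring
  omega

end HubSums

-- ============ hub fplus ============
section HubFplus
variable {r s t : ℕ}

lemma fplus_hubD (hr : 1 ≤ r) (hs : 1 ≤ s) (hK : s*(2*r+1) = 2*t+1)
    (i0 : Fin r) (h0 : Fin 2) :
    fplus (DF r s) (fLab r s t) (Sum.inl (i0, Sum.inr h0))
      = 10*(s*(s*(2*r+1))) + s*t + 2*s := by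
  rw [fplus_eq]
  set f2 : Fin s → BladeT r s × Fin 5 := fun j => (.inl (i0, h0, j), 2) with hf2
  set f3 : Fin s → BladeT r s × Fin 5 := fun j => (.inl (i0, h0, j), 3) with hf3
  set f4 : Fin s → BladeT r s × Fin 5 := fun j => (.inl (i0, h0+1, j), 4) with hf4
  have hfil : Finset.univ.filter
      (fun p : BladeT r s × Fin 5 => (Sum.inl (i0, Sum.inr h0) : DFVert r s) ∈ eps p.1 p.2)
      = (Finset.univ.image f2 ∪ Finset.univ.image f3) ∪ Finset.univ.image f4 := by
    ext p
    simp only [Finset.mem_filter, Finset.mem_univ, true_and, Finset.mem_union,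
      Finset.mem_image, mem_eps_hubD, hf2, hf3, hf4]
    constructor
    · rintro (⟨j, rfl⟩ | ⟨j, rfl⟩ | ⟨j, rfl⟩)
      · exact Or.inl (Or.inl ⟨j, rfl⟩)
      · exact Or.inl (Or.inr ⟨j, rfl⟩)
      · exact Or.inr ⟨j, rfl⟩
    · rintro ((⟨j, rfl⟩ | ⟨j, rfl⟩) | ⟨j, rfl⟩)
      · exact Or.inl ⟨j, rfl⟩
      · exact Or.inr (Or.inl ⟨j, rfl⟩)
      · exact Or.inr (Or.inr ⟨j, rfl⟩)
  rw [hfil]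
  have hinj2 : ∀ x ∈ Finset.univ, ∀ y ∈ Finset.univ, f2 x = f2 y → x = y := by
    intro x _ y _ h; simpa [hf2, Prod.ext_iff] using h
  have hinj3 : ∀ x ∈ Finset.univ, ∀ y ∈ Finset.univ, f3 x = f3 y → x = y := by
    intro x _ y _ h; simpa [hf3, Prod.ext_iff] using h
  have hinj4 : ∀ x ∈ Finset.univ, ∀ y ∈ Finset.univ, f4 x = f4 y → x = y := by
    intro x _ y _ h; simpa [hf4, Prod.ext_iff] using h
  have hd23 : Disjoint (Finset.univ.image f2) (Finset.univ.image f3) := by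
    rw [Finset.disjoint_left]
    rintro p hp hq
    simp only [Finset.mem_image, hf2, hf3] at hp hq
    obtain ⟨j, -, rfl⟩ := hp
    obtain ⟨j', -, h⟩ := hq
    simp [Prod.ext_iff] at h
  have hd234 : Disjoint (Finset.univ.image f2 ∪ Finset.univ.image f3)
      (Finset.univ.image f4) := by
    rw [Finset.disjoint_left]
    rintro p hp hq
    simp only [Finset.mem_union, Finset.mem_image, hf2, hf3, hf4] at hp hq
    obtain ⟨j', -, h⟩ := hq
    rcases hp with ⟨j, -, rfl⟩ | ⟨j, -, rfl⟩ <;> simp [Prod.ext_iff] at h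
  rw [Finset.sum_union hd234, Finset.sum_union hd23,
    Finset.sum_image hinj2, Finset.sum_image hinj3, Finset.sum_image hinj4]
  refine hub_arith hK (sum_lab23 hr hs hK (fun j => .inl (i0, h0, j)))
    (sum_lab4 hr hs hK (fun j => .inl (i0, h0+1, j)))
    (sumW i0 h0) (sumW i0 (h0+1)) (pairB i0 h0) (sj2 s)

lemma fplus_hubX (hr : 1 ≤ r) (hs : 1 ≤ s) (hK : s*(2*r+1) = 2*t+1) :
    fplus (DF r s) (fLab r s t) (Sum.inr (Sum.inr 0))
      = 10*(s*(s*(2*r+1))) + s*t + 2*s := by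
  rw [fplus_eq]
  set f2 : Fin s → BladeT r s × Fin 5 := fun j => (.inr j, 2) with hf2
  set f3 : Fin s → BladeT r s × Fin 5 := fun j => (.inr j, 3) with hf3
  set f4 : Fin s → BladeT r s × Fin 5 := fun j => (.inr j, 4) with hf4
  have hfil : Finset.univ.filter
      (fun p : BladeT r s × Fin 5 => (Sum.inr (Sum.inr 0) : DFVert r s) ∈ eps p.1 p.2)
      = (Finset.univ.image f2 ∪ Finset.univ.image f3) ∪ Finset.univ.image f4 := by
    ext p
    simp only [Finset.mem_filter, Finset.mem_univ, true_and, Finset.mem_union,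
      Finset.mem_image, mem_eps_hubX, hf2, hf3, hf4]
    constructor
    · rintro (⟨j, rfl⟩ | ⟨j, rfl⟩ | ⟨j, rfl⟩)
      · exact Or.inl (Or.inl ⟨j, rfl⟩)
      · exact Or.inl (Or.inr ⟨j, rfl⟩)
      · exact Or.inr ⟨j, rfl⟩
    · rintro ((⟨j, rfl⟩ | ⟨j, rfl⟩) | ⟨j, rfl⟩)
      · exact Or.inl ⟨j, rfl⟩
      · exact Or.inr (Or.inl ⟨j, rfl⟩)
      · exact Or.inr (Or.inr ⟨j, rfl⟩)
  rw [hfil]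
  have hinj2 : ∀ x ∈ Finset.univ, ∀ y ∈ Finset.univ, f2 x = f2 y → x = y := by
    intro x _ y _ h; simpa [hf2, Prod.ext_iff] using h
  have hinj3 : ∀ x ∈ Finset.univ, ∀ y ∈ Finset.univ, f3 x = f3 y → x = y := by
    intro x _ y _ h; simpa [hf3, Prod.ext_iff] using h
  have hinj4 : ∀ x ∈ Finset.univ, ∀ y ∈ Finset.univ, f4 x = f4 y → x = y := by
    intro x _ y _ h; simpa [hf4, Prod.ext_iff] using h
  have hd23 : Disjoint (Finset.univ.image f2) (Finset.univ.image f3) := by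
    rw [Finset.disjoint_left]
    rintro p hp hq
    simp only [Finset.mem_image, hf2, hf3] at hp hq
    obtain ⟨j, -, rfl⟩ := hp
    obtain ⟨j', -, h⟩ := hq
    simp [Prod.ext_iff] at h
  have hd234 : Disjoint (Finset.univ.image f2 ∪ Finset.univ.image f3)
      (Finset.univ.image f4) := by
    rw [Finset.disjoint_left]
    rintro p hp hq
    simp only [Finset.mem_union, Finset.mem_image, hf2, hf3, hf4] at hp hq
    obtain ⟨j', -, h⟩ := hq
    rcases hp with ⟨j, -, rfl⟩ | ⟨j, -, rfl⟩ <;> simp [Prod.ext_iff] at h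
  rw [Finset.sum_union hd234, Finset.sum_union hd23,
    Finset.sum_image hinj2, Finset.sum_image hinj3, Finset.sum_image hinj4]
  refine hub_arith hK (sum_lab23 hr hs hK (fun j => .inr j))
    (sum_lab4 hr hs hK (fun j => .inr j))
    ?_ ?_ (show r + r = 2*r by omega) (sj2 s)
  · exact sumWFB
  · exact sumWFB

end HubFplus

-- ============ assembly ============
section Assembly
variable {r s t : ℕ}

lemma vert_cases (v : DFVert r s) :
    (∃ b, v = uV b) ∨ (∃ b, v = wV b) ∨ (∃ b, v = vV b) ∨
    (∃ i0 h0, v = Sum.inl (i0, Sum.inr h0)) ∨ v = Sum.inr (Sum.inr 0) := by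
  rcases v with ⟨i, a⟩ | z
  · rcases a with ⟨c, j, pos⟩ | h2
    · fin_cases pos
      · exact Or.inl ⟨.inl (i,c,j), rfl⟩
      · exact Or.inr (Or.inl ⟨.inl (i,c,j), rfl⟩)
      · exact Or.inr (Or.inr (Or.inl ⟨.inl (i,c,j), rfl⟩))
    · exact Or.inr (Or.inr (Or.inr (Or.inl ⟨i, h2, rfl⟩)))
  · rcases z with ⟨j, pos⟩ | k
    · fin_cases pos
      · exact Or.inl ⟨.inr j, rfl⟩
      · exact Or.inr (Or.inl ⟨.inr j, rfl⟩)
      · exact Or.inr (Or.inr (Or.inl ⟨.inr j, rfl⟩))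
    · obtain rfl : k = 0 := Subsingleton.elim _ _
      exact Or.inr (Or.inr (Or.inr (Or.inr rfl)))

lemma fplus_hEV (hr : 1 ≤ r) (hs : 1 ≤ s) (hK : s*(2*r+1) = 2*t+1) (b : BladeT r s) :
    fplus (DF r s) (fLab r s t) (hEV b) = 10*(s*(s*(2*r+1))) + s*t + 2*s := by
  rcases b with ⟨i, c, j⟩ | j
  · exact fplus_hubD hr hs hK i c
  · exact fplus_hubX hr hs hK

lemma fplus_hMV (hr : 1 ≤ r) (hs : 1 ≤ s) (hK : s*(2*r+1) = 2*t+1) (b : BladeT r s) :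
    fplus (DF r s) (fLab r s t) (hMV b) = 10*(s*(s*(2*r+1))) + s*t + 2*s := by
  rcases b with ⟨i, c, j⟩ | j
  · exact fplus_hubD hr hs hK i (c+1)
  · exact fplus_hubX hr hs hK

lemma ABC_facts (hr : 1 ≤ r) (hs : 1 ≤ s) (hK : s*(2*r+1) = 2*t+1) :
    5*(s*(2*r+1)) + 1 ≠ 4*(s*(2*r+1)) + t + 2 ∧
    5*(s*(2*r+1)) + 1 ≠ 10*(s*(s*(2*r+1))) + s*t + 2*s ∧
    4*(s*(2*r+1)) + t + 2 ≠ 10*(s*(s*(2*r+1))) + s*t + 2*s := by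
  have h1 : 1*3 ≤ s*(2*r+1) := Nat.mul_le_mul hs (by omega)
  have h2 : 1*(s*(2*r+1)) ≤ s*(s*(2*r+1)) := Nat.mul_le_mul_right _ hs
  omega

lemma fplus_adj_ne (hr : 1 ≤ r) (hs : 1 ≤ s) (hK : s*(2*r+1) = 2*t+1)
    {x y : DFVert r s} (h : (DF r s).Adj x y) :
    fplus (DF r s) (fLab r s t) x ≠ fplus (DF r s) (fLab r s t) y := by
  obtain ⟨⟨b, e⟩, hp⟩ := adj_cases h
  obtain ⟨hAB, hAC, hBC⟩ := ABC_facts hr hs hK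
  fin_cases e <;> simp only [eps] at hp <;> rw [Sym2.eq_iff] at hp
  · rcases hp with ⟨rfl, rfl⟩ | ⟨rfl, rfl⟩
    · rw [fplus_uV hr hs hK, fplus_wV hr hs hK]; exact hAB
    · rw [fplus_uV hr hs hK, fplus_wV hr hs hK]; exact hAB.symm
  · rcases hp with ⟨rfl, rfl⟩ | ⟨rfl, rfl⟩
    · rw [fplus_wV hr hs hK, fplus_vV hr hs hK]; exact hAB.symm
    · rw [fplus_wV hr hs hK, fplus_vV hr hs hK]; exact hAB
  · rcases hp with ⟨rfl, rfl⟩ | ⟨rfl, rfl⟩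
    · rw [fplus_uV hr hs hK, fplus_hEV hr hs hK]; exact hAC
    · rw [fplus_uV hr hs hK, fplus_hEV hr hs hK]; exact hAC.symm
  · rcases hp with ⟨rfl, rfl⟩ | ⟨rfl, rfl⟩
    · rw [fplus_vV hr hs hK, fplus_hEV hr hs hK]; exact hAC
    · rw [fplus_vV hr hs hK, fplus_hEV hr hs hK]; exact hAC.symm
  · rcases hp with ⟨rfl, rfl⟩ | ⟨rfl, rfl⟩
    · rw [fplus_wV hr hs hK, fplus_hMV hr hs hK]; exact hBC
    · rw [fplus_wV hr hs hK, fplus_hMV hr hs hK]; exact hBC.symm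

lemma edgeSet_ncard : (DF r s).edgeSet.ncard = 5*(s*(2*r+1)) := by
  rw [edgeSet_eq, ← Set.image_univ,
    Set.ncard_image_of_injective _ (eps_pair_inj (r := r) (s := s)), Set.ncard_univ]
  simp only [Nat.card_eq_fintype_card, Fintype.card_prod, Fintype.card_sum,
    Fintype.card_fin]
  ring

lemma fLab_bijOn (hr : 1 ≤ r) (hs : 1 ≤ s) (hK : s*(2*r+1) = 2*t+1) :
    Set.BijOn (fLab r s t) (DF r s).edgeSet (Set.Icc 1 (DF r s).edgeSet.ncard) := by
  rw [edgeSet_ncard]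
  refine ⟨?_, ?_, ?_⟩
  · rintro e he
    rw [edgeSet_eq] at he
    obtain ⟨p, rfl⟩ := he
    rw [fLab_eps p.1 p.2]
    have := labP_bounds hr hs hK p
    exact ⟨this.1, this.2⟩
  · rintro e1 he1 e2 he2 hfe
    rw [edgeSet_eq] at he1 he2
    obtain ⟨p, rfl⟩ := he1
    obtain ⟨q, rfl⟩ := he2
    rw [fLab_eps p.1 p.2, fLab_eps q.1 q.2] at hfe
    have : p = q := labP_inj hr hs hK hfe
    rw [this]
  · rintro n ⟨hn1, hn2⟩
    obtain ⟨p, hp⟩ := labP_surj hr hs hK hn1 hn2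
    refine ⟨eps p.1 p.2, ?_, ?_⟩
    · rw [edgeSet_eq]; exact ⟨p, rfl⟩
    · rw [fLab_eps p.1 p.2, hp]

lemma range_fplus (hr : 1 ≤ r) (hs : 1 ≤ s) (hK : s*(2*r+1) = 2*t+1) :
    Set.range (fplus (DF r s) (fLab r s t)) =
      {5*(s*(2*r+1)) + 1, 4*(s*(2*r+1)) + t + 2, 10*(s*(s*(2*r+1))) + s*t + 2*s} := by
  ext x
  constructor
  · rintro ⟨v, rfl⟩
    rcases vert_cases v with ⟨b, rfl⟩ | ⟨b, rfl⟩ | ⟨b, rfl⟩ | ⟨i0, h0, rfl⟩ | rfl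
    · rw [fplus_uV hr hs hK]; exact Or.inl rfl
    · rw [fplus_wV hr hs hK]; exact Or.inr (Or.inl rfl)
    · rw [fplus_vV hr hs hK]; exact Or.inl rfl
    · rw [fplus_hubD hr hs hK]; exact Or.inr (Or.inr rfl)
    · rw [fplus_hubX hr hs hK]; exact Or.inr (Or.inr rfl)
  · rintro (rfl | rfl | rfl)
    · exact ⟨uV (.inr ⟨0, hs⟩), fplus_uV hr hs hK _⟩
    · exact ⟨wV (.inr ⟨0, hs⟩), fplus_wV hr hs hK _⟩
    · exact ⟨Sum.inr (Sum.inr 0), fplus_hubX hr hs hK⟩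

end Assembly


theorem chiLA_DF (r s : ℕ) (hr : 1 ≤ r) (hsodd : Odd s) (hs : 1 ≤ s) :
    chiLA (DF r s) = 3 := by
  have hKodd : Odd (s*(2*r+1)) := hsodd.mul ⟨r, by ring⟩
  obtain ⟨t, hK⟩ := hKodd
  have h3mem : 3 ∈ {c : ℕ | ∃ f : Sym2 (DFVert r s) → ℕ,
      IsLocalAntimagic (DF r s) f ∧ (Set.range (fplus (DF r s) f)).ncard = c} := by
    refine ⟨fLab r s t, ⟨fLab_bijOn hr hs hK, fun u w h => fplus_adj_ne hr hs hK h⟩, ?_⟩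
    rw [range_fplus hr hs hK]
    obtain ⟨hAB, hAC, hBC⟩ := ABC_facts hr hs hK
    exact Set.ncard_eq_three.mpr ⟨_, _, _, hAB, hAC, hBC, rfl⟩
  have hlb : ∀ c ∈ {c : ℕ | ∃ f : Sym2 (DFVert r s) → ℕ,
      IsLocalAntimagic (DF r s) f ∧ (Set.range (fplus (DF r s) f)).ncard = c}, 3 ≤ c := by
    rintro c ⟨f, ⟨hbij, hne⟩, rfl⟩
    set x1 : DFVert r s := Sum.inr (Sum.inl (⟨0, hs⟩, 0)) with hx1
    set x2 : DFVert r s := Sum.inr (Sum.inl (⟨0, hs⟩, 1)) with hx2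
    set x3 : DFVert r s := Sum.inr (Sum.inr 0) with hx3
    have h12 : (DF r s).Adj x1 x2 := by
      rw [hx1, hx2, DF_adj_inr_inr, FB_adj_inl_inl, nP3_adj]
      exact ⟨rfl, Or.inl ⟨rfl, rfl⟩⟩
    have h13 : (DF r s).Adj x1 x3 := by
      rw [hx1, hx3, DF_adj_inr_inr, FB_adj_inl_inr]
      trivial
    have h23 : (DF r s).Adj x2 x3 := by
      rw [hx2, hx3, DF_adj_inr_inr, FB_adj_inl_inr]
      trivial
    have hsub : ({fplus (DF r s) f x1, fplus (DF r s) f x2, fplus (DF r s) f x3} : Set ℕ)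
        ⊆ Set.range (fplus (DF r s) f) := by
      rintro y (rfl | rfl | rfl)
      exacts [⟨x1, rfl⟩, ⟨x2, rfl⟩, ⟨x3, rfl⟩]
    have h3card : ({fplus (DF r s) f x1, fplus (DF r s) f x2, fplus (DF r s) f x3} : Set ℕ).ncard = 3 :=
      Set.ncard_eq_three.mpr ⟨_, _, _, hne h12, hne h13, hne h23, rfl⟩
    calc (3:ℕ) = _ := h3card.symm
    _ ≤ _ := Set.ncard_le_ncard hsub (Set.finite_range _)
  exact le_antisymm (Nat.sInf_le h3mem) (le_csInf ⟨3, h3mem⟩ hlb)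


end LocalAntimagic
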